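/- arXiv:2105.07478 — 3 statements merged into one kernel-verified Lean document; each statement's English description precedes it below -/
import Mathlib

section
/- Let μ be a finite signed Borel measure on [0,∞). Then the map (ω, x) ↦ L(ω,x), where L(ω,x)(t) := ∫₀^∞ x(t − ωl) μ(dl), is jointly continuous from ℝ × C_{2π}(ℝ) to C_{2π}(ℝ), where C_{2π}(ℝ) carries the supremum norm. -/
open MeasureTheory Real Set BoundedContinuousFunction

/-- A continuous `2π`-periodic function is uniformly continuous (ε-δ form). -/
lemma uc_of_periodic {f : ℝ → ℝ} (hf : Continuous f) (hp : Function.Periodic f (2 * π)) :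
    ∀ ε > 0, ∃ δ > 0, ∀ a b : ℝ, |a - b| < δ → |f a - f b| < ε := by
  intro ε hε
  have hK : IsCompact (Icc (-1 : ℝ) (2 * π + 1)) := isCompact_Icc
  have huc : UniformContinuousOn f (Icc (-1 : ℝ) (2 * π + 1)) :=
    hK.uniformContinuousOn_of_continuous hf.continuousOn
  rw [Metric.uniformContinuousOn_iff] at huc
  obtain ⟨δ, hδ, hδ'⟩ := huc ε hε
  refine ⟨min δ 1, by positivity, ?_⟩
  intro a b hab
  have h2π : 0 < 2 * π := by positivity
  set n := ⌊a / (2 * π)⌋ with hn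
  have ha1 : 0 ≤ a - n * (2 * π) := Int.sub_floor_div_mul_nonneg a h2π
  have ha2 : a - n * (2 * π) < 2 * π := Int.sub_floor_div_mul_lt a h2π
  have habδ : |a - b| < δ := lt_of_lt_of_le hab (min_le_left _ _)
  have hab1 : |a - b| < 1 := lt_of_lt_of_le hab (min_le_right _ _)
  have hmA : a - n * (2 * π) ∈ Icc (-1 : ℝ) (2 * π + 1) :=
    ⟨by linarith, by linarith⟩
  have hmB : b - n * (2 * π) ∈ Icc (-1 : ℝ) (2 * π + 1) := by
    have h1 : -(1:ℝ) < a - b := neg_lt_of_abs_lt hab1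
    have h2 : a - b < 1 := lt_of_abs_lt hab1
    constructor <;> [linarith; linarith]
  have key := hδ' _ hmA _ hmB (by
    rw [Real.dist_eq]
    have : a - n * (2 * π) - (b - n * (2 * π)) = a - b := by ring
    rw [this]; exact habδ)
  rw [Real.dist_eq, hp.sub_int_mul_eq n, hp.sub_int_mul_eq n] at key
  exact key

/-- Tail of a finite measure is eventually small. -/
lemma tail_small (ν : Measure ℝ) [IsFiniteMeasure ν] {c : ℝ} (hc : 0 < c) :
    ∃ R : ℝ, 0 ≤ R ∧ (ν (Ioi R)).toReal ≤ c := by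
  have hanti : Antitone fun n : ℕ => Ioi (n : ℝ) := fun i j hij =>
    Ioi_subset_Ioi (by exact_mod_cast hij)
  have h := tendsto_measure_iInter_atTop (μ := ν) (s := fun n : ℕ => Ioi (n : ℝ))
    (fun n => measurableSet_Ioi.nullMeasurableSet) hanti ⟨0, measure_ne_top ν _⟩
  have hempty : (⋂ n : ℕ, Ioi ((n : ℕ) : ℝ)) = ∅ := by
    ext x
    simp only [mem_iInter, mem_Ioi, mem_empty_iff_false, iff_false, not_forall, not_lt]
    obtain ⟨n, hn⟩ := exists_nat_gt x
    exact ⟨n, hn.le⟩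
  rw [hempty, measure_empty] at h
  rw [ENNReal.tendsto_atTop_zero] at h
  obtain ⟨n, hn⟩ := h (ENNReal.ofReal c) (by simp [hc])
  refine ⟨(n : ℝ), Nat.cast_nonneg n, ?_⟩
  exact ENNReal.toReal_le_of_le_ofReal hc.le (hn n le_rfl)

/-- Splitting bound for a set integral over `[0,∞)`. -/
lemma split_bound (ν : Measure ℝ) [IsFiniteMeasure ν] {R : ℝ} (hR : 0 ≤ R)
    {f : ℝ → ℝ} (hf : IntegrableOn f (Ici 0) ν)
    {C₁ C₂ : ℝ} (hC₁ : 0 ≤ C₁) (hC₂ : 0 ≤ C₂)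
    (h1 : ∀ l ∈ Icc (0:ℝ) R, |f l| ≤ C₁) (h2 : ∀ l ∈ Ioi R, |f l| ≤ C₂) :
    |∫ l in Ici (0:ℝ), f l ∂ν| ≤ C₁ * (ν univ).toReal + C₂ * (ν (Ioi R)).toReal := by
  have hsplit : Ici (0:ℝ) = Icc 0 R ∪ Ioi R := (Icc_union_Ioi_eq_Ici hR).symm
  have hdisj : Disjoint (Icc (0:ℝ) R) (Ioi R) := by
    rw [Set.disjoint_left]
    rintro a ⟨_, h⟩ h'
    exact absurd h' (not_lt.2 h)
  have hf1 : IntegrableOn f (Icc (0:ℝ) R) ν := by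
    apply hf.mono_set; rw [hsplit]; exact subset_union_left
  have hf2 : IntegrableOn f (Ioi R) ν := by
    apply hf.mono_set; rw [hsplit]; exact subset_union_right
  rw [hsplit, setIntegral_union hdisj measurableSet_Ioi hf1 hf2]
  have b1 : |∫ l in Icc (0:ℝ) R, f l ∂ν| ≤ C₁ * (ν (Icc 0 R)).toReal :=
    by have := norm_setIntegral_le_of_norm_le_const (f := f) (C := C₁) (measure_lt_top ν (Icc 0 R)) h1; exact this
  have b2 : |∫ l in Ioi R, f l ∂ν| ≤ C₂ * (ν (Ioi R)).toReal :=
    by have := norm_setIntegral_le_of_norm_le_const (f := f) (C := C₂) (measure_lt_top ν (Ioi R)) h2; exact this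
  have b1' : C₁ * (ν (Icc 0 R)).toReal ≤ C₁ * (ν univ).toReal := by
    apply mul_le_mul_of_nonneg_left _ hC₁
    exact ENNReal.toReal_mono (measure_ne_top ν _) (measure_mono (subset_univ _))
  calc |∫ l in Icc (0:ℝ) R, f l ∂ν + ∫ l in Ioi R, f l ∂ν|
      ≤ |∫ l in Icc (0:ℝ) R, f l ∂ν| + |∫ l in Ioi R, f l ∂ν| := abs_add_le _ _
    _ ≤ C₁ * (ν univ).toReal + C₂ * (ν (Ioi R)).toReal := by
        exact add_le_add (b1.trans b1') b2

/-- Whole-set bound for a set integral over `[0,∞)`. -/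
lemma whole_bound (ν : Measure ℝ) [IsFiniteMeasure ν]
    {f : ℝ → ℝ} (hf : IntegrableOn f (Ici 0) ν)
    {C : ℝ} (hC : 0 ≤ C) (h : ∀ l ∈ Ici (0:ℝ), |f l| ≤ C) :
    |∫ l in Ici (0:ℝ), f l ∂ν| ≤ C * (ν univ).toReal := by
  have b : |∫ l in Ici (0:ℝ), f l ∂ν| ≤ C * (ν (Ici 0)).toReal :=
    by have := norm_setIntegral_le_of_norm_le_const (f := f) (C := C) (measure_lt_top ν (Ici 0)) h; exact this
  refine b.trans (mul_le_mul_of_nonneg_left ?_ hC)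
  exact ENNReal.toReal_mono (measure_ne_top ν _) (measure_mono (subset_univ _))

/-- Integrability of `l ↦ x (t - ω * l)` for a bounded continuous `x`. -/
lemma integrableOn_comp (ν : Measure ℝ) [IsFiniteMeasure ν] (x : ℝ →ᵇ ℝ) (t ω : ℝ) :
    IntegrableOn (fun l => x (t - ω * l)) (Ici 0) ν := by
  have : Integrable (fun l => x (t - ω * l)) ν :=
    (x.compContinuous ⟨fun l : ℝ => t - ω * l, by continuity⟩).integrable ν
  exact this.integrableOn

lemma abs_sub_sub_le (a b c d : ℝ) : |(a - b) - (c - d)| ≤ |a - c| + |b - d| := by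
  have h : (a - b) - (c - d) = (a - c) - (b - d) := by ring
  rw [h]
  exact abs_sub _ _

/-- For a finite signed Borel measure `μ = μp − μn` on `[0,∞)`, the map
`(ω, x) ↦ L(ω,x)`, `L(ω,x)(t) = ∫₀^∞ x(t−ωl) μ(dl)`, is jointly continuous from
`ℝ × C_{2π}(ℝ)` to `C_{2π}(ℝ)` (continuous `2π`-periodic functions with sup norm,
realized as a subspace of the bounded continuous functions). -/
theorem stmt_3
    (μp μn : Measure ℝ) [IsFiniteMeasure μp] [IsFiniteMeasure μn]
    (hμp : μp (Iio 0) = 0) (hμn : μn (Iio 0) = 0)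
    (L : ℝ → {x : ℝ →ᵇ ℝ // Function.Periodic (⇑x) (2 * π)} → (ℝ →ᵇ ℝ))
    (hL : ∀ ω x t, L ω x t =
      (∫ l in Ici (0:ℝ), (x : ℝ →ᵇ ℝ) (t - ω * l) ∂μp)
        - (∫ l in Ici (0:ℝ), (x : ℝ →ᵇ ℝ) (t - ω * l) ∂μn))
    (hLper : ∀ ω x, Function.Periodic (⇑(L ω x)) (2 * π)) :
    Continuous (fun p : ℝ × {x : ℝ →ᵇ ℝ // Function.Periodic (⇑x) (2 * π)} =>
      L p.1 p.2) := by
  rw [Metric.continuous_iff]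
  rintro ⟨ω₀, x₀⟩ ε hε
  set Mp : ℝ := (μp univ).toReal with hMp
  set Mn : ℝ := (μn univ).toReal with hMn
  have hMp0 : 0 ≤ Mp := ENNReal.toReal_nonneg
  have hMn0 : 0 ≤ Mn := ENNReal.toReal_nonneg
  set M : ℝ := Mp + Mn with hM
  have hM0 : 0 ≤ M := by positivity
  set N : ℝ := ‖(x₀ : ℝ →ᵇ ℝ)‖ with hN
  have hN0 : 0 ≤ N := norm_nonneg _
  set ε' : ℝ := ε / (8 * (M + 1)) with hε'def
  have hε'pos : 0 < ε' := by positivity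
  obtain ⟨δ₁, hδ₁pos, hδ₁⟩ := uc_of_periodic (x₀ : ℝ →ᵇ ℝ).continuous x₀.2 ε' hε'pos
  have hcpos : (0:ℝ) < ε / (8 * (2 * N + 1)) := by positivity
  obtain ⟨Rp, hRp0, hRp⟩ := tail_small μp hcpos
  obtain ⟨Rn, hRn0, hRn⟩ := tail_small μn hcpos
  set R : ℝ := max Rp Rn with hRdef
  have hR0 : 0 ≤ R := le_trans hRp0 (le_max_left _ _)
  have hRp' : (μp (Ioi R)).toReal ≤ ε / (8 * (2 * N + 1)) :=
    le_trans (ENNReal.toReal_mono (measure_ne_top μp _)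
      (measure_mono (Ioi_subset_Ioi (le_max_left _ _)))) hRp
  have hRn' : (μn (Ioi R)).toReal ≤ ε / (8 * (2 * N + 1)) :=
    le_trans (ENNReal.toReal_mono (measure_ne_top μn _)
      (measure_mono (Ioi_subset_Ioi (le_max_right _ _)))) hRn
  set δ : ℝ := min (δ₁ / (R + 1)) (ε / (4 * (M + 1))) with hδdef
  have hδpos : 0 < δ := lt_min (by positivity) (by positivity)
  refine ⟨δ, hδpos, ?_⟩
  rintro ⟨ω, x⟩ hq
  rw [Prod.dist_eq, max_lt_iff] at hq
  obtain ⟨hqω, hqx⟩ := hq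
  have hqx' : dist (x : ℝ →ᵇ ℝ) (x₀ : ℝ →ᵇ ℝ) < δ := by
    rwa [Subtype.dist_eq] at hqx
  have hqω' : |ω - ω₀| < δ := by rwa [Real.dist_eq] at hqω
  -- Claim A : dist (L ω x) (L ω x₀) ≤ ε/4
  have claimA : dist (L ω x) (L ω x₀) ≤ ε / 4 := by
    rw [BoundedContinuousFunction.dist_le (by positivity)]
    intro t
    rw [Real.dist_eq, hL ω x t, hL ω x₀ t]
    have key : ∀ (ν : Measure ℝ) (_ : IsFiniteMeasure ν),
        |(∫ l in Ici (0:ℝ), (x : ℝ →ᵇ ℝ) (t - ω * l) ∂ν)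
          - ∫ l in Ici (0:ℝ), (x₀ : ℝ →ᵇ ℝ) (t - ω * l) ∂ν|
          ≤ δ * (ν univ).toReal := by
      intro ν hν
      rw [← integral_sub (integrableOn_comp ν _ t ω) (integrableOn_comp ν _ t ω)]
      apply whole_bound ν
        ((integrableOn_comp ν (x : ℝ →ᵇ ℝ) t ω).sub (integrableOn_comp ν (x₀ : ℝ →ᵇ ℝ) t ω))
        hδpos.le
      intro l _
      have : |(x : ℝ →ᵇ ℝ) (t - ω * l) - (x₀ : ℝ →ᵇ ℝ) (t - ω * l)|
          ≤ dist (x : ℝ →ᵇ ℝ) (x₀ : ℝ →ᵇ ℝ) := by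
        rw [← Real.dist_eq]
        exact BoundedContinuousFunction.dist_coe_le_dist _
      exact this.trans hqx'.le
    have kp := key μp inferInstance
    have kn := key μn inferInstance
    have habs : |((∫ l in Ici (0:ℝ), (x : ℝ →ᵇ ℝ) (t - ω * l) ∂μp)
          - ∫ l in Ici (0:ℝ), (x : ℝ →ᵇ ℝ) (t - ω * l) ∂μn)
        - ((∫ l in Ici (0:ℝ), (x₀ : ℝ →ᵇ ℝ) (t - ω * l) ∂μp)
          - ∫ l in Ici (0:ℝ), (x₀ : ℝ →ᵇ ℝ) (t - ω * l) ∂μn)|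
        ≤ δ * Mp + δ * Mn := by
      calc _ ≤ |(∫ l in Ici (0:ℝ), (x : ℝ →ᵇ ℝ) (t - ω * l) ∂μp)
          - ∫ l in Ici (0:ℝ), (x₀ : ℝ →ᵇ ℝ) (t - ω * l) ∂μp|
          + |(∫ l in Ici (0:ℝ), (x : ℝ →ᵇ ℝ) (t - ω * l) ∂μn)
          - ∫ l in Ici (0:ℝ), (x₀ : ℝ →ᵇ ℝ) (t - ω * l) ∂μn| := by
            exact abs_sub_sub_le _ _ _ _
        _ ≤ δ * Mp + δ * Mn := add_le_add kp kn
    refine habs.trans ?_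
    have hδle : δ ≤ ε / (4 * (M + 1)) := min_le_right _ _
    calc δ * Mp + δ * Mn = δ * M := by rw [hM]; ring
      _ ≤ (ε / (4 * (M + 1))) * M := by gcongr
      _ ≤ ε / 4 := by
          rw [div_mul_eq_mul_div, div_le_div_iff₀ (by positivity) (by norm_num)]
          nlinarith
  -- Claim B : dist (L ω x₀) (L ω₀ x₀) ≤ ε/2
  have claimB : dist (L ω x₀) (L ω₀ x₀) ≤ ε / 2 := by
    rw [BoundedContinuousFunction.dist_le (by positivity)]
    intro t
    rw [Real.dist_eq, hL ω x₀ t, hL ω₀ x₀ t]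
    have key : ∀ (ν : Measure ℝ) (_ : IsFiniteMeasure ν),
        (ν (Ioi R)).toReal ≤ ε / (8 * (2 * N + 1)) → (ν univ).toReal ≤ M →
        |(∫ l in Ici (0:ℝ), (x₀ : ℝ →ᵇ ℝ) (t - ω * l) ∂ν)
          - ∫ l in Ici (0:ℝ), (x₀ : ℝ →ᵇ ℝ) (t - ω₀ * l) ∂ν|
          ≤ ε / 4 := by
      intro ν hν htail hmass
      rw [← integral_sub (integrableOn_comp ν _ t ω) (integrableOn_comp ν _ t ω₀)]
      have hsb := split_bound ν hR0
        (f := fun l => (x₀ : ℝ →ᵇ ℝ) (t - ω * l) - (x₀ : ℝ →ᵇ ℝ) (t - ω₀ * l))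
        ((integrableOn_comp ν (x₀ : ℝ →ᵇ ℝ) t ω).sub (integrableOn_comp ν (x₀ : ℝ →ᵇ ℝ) t ω₀))
        hε'pos.le (by positivity : (0:ℝ) ≤ 2 * N) ?_ ?_
      · refine hsb.trans ?_
        have p1 : ε' * (ν univ).toReal ≤ ε / 8 := by
          have h1 : (ν univ).toReal ≤ M + 1 := by linarith
          have hM1 : (M : ℝ) + 1 ≠ 0 := by positivity
          calc ε' * (ν univ).toReal ≤ ε' * (M + 1) := by gcongr
            _ = ε / 8 := by rw [hε'def]; field_simp
        have p2 : 2 * N * (ν (Ioi R)).toReal ≤ ε / 8 := by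
          calc 2 * N * (ν (Ioi R)).toReal ≤ (2 * N + 1) * (ε / (8 * (2 * N + 1))) := by
                apply mul_le_mul (by linarith) htail ENNReal.toReal_nonneg (by positivity)
            _ = ε / 8 := by field_simp
        linarith
      · -- on Icc 0 R, use uniform continuity
        intro l hl
        have hdiff : |(t - ω * l) - (t - ω₀ * l)| < δ₁ := by
          have h1 : |(t - ω * l) - (t - ω₀ * l)| = |ω - ω₀| * l := by
            have e : (t - ω * l) - (t - ω₀ * l) = (ω₀ - ω) * l := by ring
            rw [e, abs_mul, abs_of_nonneg hl.1, abs_sub_comm ω₀ ω]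
          rw [h1]
          have hδle : δ ≤ δ₁ / (R + 1) := min_le_left _ _
          calc |ω - ω₀| * l ≤ (δ₁ / (R + 1)) * R := by
                apply mul_le_mul (hqω'.le.trans hδle) hl.2 hl.1 (by positivity)
            _ < δ₁ := by
                rw [div_mul_eq_mul_div, div_lt_iff₀ (by positivity)]
                nlinarith
        exact (hδ₁ _ _ hdiff).le
      · -- on Ioi R, bounded by 2N
        intro l _
        have b1 : |(x₀ : ℝ →ᵇ ℝ) (t - ω * l)| ≤ N :=
          (x₀ : ℝ →ᵇ ℝ).norm_coe_le_norm _
        have b2 : |(x₀ : ℝ →ᵇ ℝ) (t - ω₀ * l)| ≤ N :=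
          (x₀ : ℝ →ᵇ ℝ).norm_coe_le_norm _
        calc |(x₀ : ℝ →ᵇ ℝ) (t - ω * l) - (x₀ : ℝ →ᵇ ℝ) (t - ω₀ * l)|
            ≤ |(x₀ : ℝ →ᵇ ℝ) (t - ω * l)| + |(x₀ : ℝ →ᵇ ℝ) (t - ω₀ * l)| := abs_sub _ _
          _ ≤ 2 * N := by linarith
    have kp := key μp inferInstance hRp' (by rw [hM]; linarith [hMn0])
    have kn := key μn inferInstance hRn' (by rw [hM]; linarith [hMp0])
    calc |((∫ l in Ici (0:ℝ), (x₀ : ℝ →ᵇ ℝ) (t - ω * l) ∂μp)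
          - ∫ l in Ici (0:ℝ), (x₀ : ℝ →ᵇ ℝ) (t - ω * l) ∂μn)
        - ((∫ l in Ici (0:ℝ), (x₀ : ℝ →ᵇ ℝ) (t - ω₀ * l) ∂μp)
          - ∫ l in Ici (0:ℝ), (x₀ : ℝ →ᵇ ℝ) (t - ω₀ * l) ∂μn)|
        ≤ |(∫ l in Ici (0:ℝ), (x₀ : ℝ →ᵇ ℝ) (t - ω * l) ∂μp)
          - ∫ l in Ici (0:ℝ), (x₀ : ℝ →ᵇ ℝ) (t - ω₀ * l) ∂μp|
          + |(∫ l in Ici (0:ℝ), (x₀ : ℝ →ᵇ ℝ) (t - ω * l) ∂μn)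
          - ∫ l in Ici (0:ℝ), (x₀ : ℝ →ᵇ ℝ) (t - ω₀ * l) ∂μn| :=
            abs_sub_sub_le _ _ _ _
      _ ≤ ε / 4 + ε / 4 := add_le_add kp kn
      _ = ε / 2 := by ring
  calc dist (L ω x) (L ω₀ x₀)
      ≤ dist (L ω x) (L ω x₀) + dist (L ω x₀) (L ω₀ x₀) := dist_triangle _ _ _
    _ ≤ ε / 4 + ε / 2 := add_le_add claimA claimB
    _ < ε := by linarith
end

section
/- Let χ ∈ L¹((0,∞),ℝ), c ∈ ℝ, and suppose that for every integer n with n ≠ ±1 one has 1 − c·∫₀^∞ χ(l) e^{−inl} dl ≠ 0. Define K on X₂ by (Kφ)(t) = c ∫₀^∞ χ(l) φ(t − l) dl. Then the kernel of I − K on X₂ is trivial: if g ∈ X₂ satisfies g(t) = c ∫₀^∞ χ(l) g(t − l) dl for all t ∈ ℝ, then g = 0. -/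
open MeasureTheory Real Set Complex

open AddCircle in
private lemma fourier_uniq {T : ℝ} [hT : Fact (0 < T)] (F : C(AddCircle T, ℂ))
    (h : ∀ n : ℤ, fourierCoeff (⇑F) n = 0) : F = 0 := by
  have h2 : ContinuousMap.toLp (E := ℂ) 2 haarAddCircle ℂ F = 0 := by
    refine (fourierBasis (T := T)).repr.injective ?_
    rw [map_zero]
    ext n
    rw [fourierBasis_repr]
    exact (fourierCoeff_toLp F n).trans (h n)
  exact ContinuousMap.toLp_injective (E := ℂ) (𝕜 := ℂ) (p := 2)
    (haarAddCircle (T := T)) (by rw [h2]; simp)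

/-- If `1 − c·χ̂(n) ≠ 0` for every integer `n ≠ ±1`, then the kernel of
`I − K` on `X₂` is trivial: any `g ∈ X₂` with `g(t) = c ∫₀^∞ χ(l) g(t−l) dl` for all
`t` vanishes identically. -/
theorem stmt_6 (χ : ℝ → ℝ) (hχ : IntegrableOn χ (Ioi 0)) (c : ℝ)
    (hchar : ∀ n : ℤ, n ≠ 1 → n ≠ -1 →
      (1 : ℂ) - (c : ℂ) * ∫ l in Ioi (0:ℝ), (χ l : ℂ) * Complex.exp (-Complex.I * n * l) ≠ 0)
    (g : ℝ → ℝ) (hgc : Continuous g) (hgper : Function.Periodic g (2 * π))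
    (hgX2 : (∫ t in (0:ℝ)..(2 * π), (g t : ℂ) * Complex.exp (Complex.I * t)) = 0)
    (heq : ∀ t : ℝ, g t = c * ∫ l in Ioi (0:ℝ), χ l * g (t - l)) :
    g = 0 := by
  haveI hT : Fact (0 < 2 * π) := ⟨by positivity⟩
  have h2π : (0:ℝ) ≤ 2 * π := by positivity
  set gC : ℝ → ℂ := fun t => (g t : ℂ) with hgC_def
  have hgCper : Function.Periodic gC (2 * π) := fun x => by simp [gC, hgper x]
  have hgCc : Continuous gC := Complex.continuous_ofReal.comp hgc
  let G : C(AddCircle (2 * π), ℂ) := ⟨hgCper.lift, continuous_coinduced_dom.mpr hgCc⟩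
  have hGg : ∀ t : ℝ, G (t : AddCircle (2 * π)) = gC t := fun t => hgCper.lift_coe t
  obtain ⟨M, hM⟩ : ∃ M : ℝ, ∀ t : ℝ, ‖gC t‖ ≤ M := by
    refine ⟨‖G‖, fun t => ?_⟩
    rw [← hGg t]
    exact G.norm_coe_le_norm _
  set γ : ℤ → ℂ := fun n => ∫ t in (0:ℝ)..(2 * π), gC t * Complex.exp (-Complex.I * n * t)
    with hγ_def
  have hfc : ∀ n : ℤ, fourierCoeff (⇑G) n = (1 / (2 * π : ℝ) : ℂ) * γ n := by
    intro n
    rw [fourierCoeff_eq_intervalIntegral (⇑G) n 0]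
    rw [zero_add]
    have key : ∀ x : ℝ, (fourier (-n) (x : AddCircle (2 * π)) : ℂ) • G (x : AddCircle (2 * π))
        = gC x * Complex.exp (-Complex.I * n * x) := by
      intro x
      rw [hGg x, fourier_coe_apply, smul_eq_mul, mul_comm]
      congr 1
      congr 1
      have hπ : (π : ℂ) ≠ 0 := by simpa using Real.pi_ne_zero
      push_cast
      field_simp
    rw [intervalIntegral.integral_congr (fun x _ => key x)]
    simp [hγ_def, Complex.real_smul]
  -- γ(-1) = 0 from hgX2
  have hγneg1 : γ (-1) = 0 := by
    rw [hγ_def]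
    simp only [Int.cast_neg, Int.cast_one]
    rw [← hgX2]
    apply intervalIntegral.integral_congr
    intro x _
    simp only [hgC_def]
    ring_nf
  -- γ(1) = 0 by conjugation (g real)
  have hγ1 : γ 1 = 0 := by
    have hconj : γ 1 = (starRingEnd ℂ) (γ (-1)) := by
      rw [hγ_def]
      simp only [Int.cast_neg, Int.cast_one]
      rw [intervalIntegral.integral_of_le h2π, intervalIntegral.integral_of_le h2π,
        ← integral_conj]
      apply integral_congr_ae
      filter_upwards with x
      simp only [map_mul, Complex.conj_ofReal, ← Complex.exp_conj, gC]
      congr 2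
      simp
    rw [hconj, hγneg1, map_zero]
  -- convolution identity
  have hkey : ∀ n : ℤ, n ≠ 1 → n ≠ -1 → γ n = 0 := by
    intro n hn1 hn2
    set e : ℝ → ℂ := fun x => Complex.exp (-Complex.I * n * x) with he_def
    set χh : ℂ := ∫ l in Ioi (0:ℝ), (χ l : ℂ) * e l with hχh
    -- pointwise identity for gC
    have hgCeq : ∀ t : ℝ, gC t = (c : ℂ) * ∫ l in Ioi (0:ℝ), (χ l : ℂ) * gC (t - l) := by
      intro t
      have h1 : (g t : ℂ) = ((c * ∫ l in Ioi (0:ℝ), χ l * g (t - l) : ℝ) : ℂ) :=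
        congrArg Complex.ofReal (heq t)
      show (g t : ℂ) = _
      rw [h1]
      push_cast
      rw [show ((∫ l in Ioi (0:ℝ), χ l * g (t - l) : ℝ) : ℂ)
          = ∫ l in Ioi (0:ℝ), ((χ l * g (t - l) : ℝ) : ℂ) from (integral_ofReal (𝕜 := ℂ)).symm]
      have h2 : (∫ l in Ioi (0:ℝ), ((χ l * g (t - l) : ℝ) : ℂ))
          = ∫ l in Ioi (0:ℝ), (χ l : ℂ) * gC (t - l) :=
        integral_congr_ae (Filter.Eventually.of_forall fun l => by push_cast; rfl)
      rw [h2]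
    -- integrability on the product
    set μ : Measure ℝ := volume.restrict (Ioc (0:ℝ) (2 * π)) with hμ
    set ν : Measure ℝ := volume.restrict (Ioi (0:ℝ)) with hν
    have hχℂ : Integrable (fun l : ℝ => (χ l : ℂ)) ν := hχ.ofReal
    have hone : Integrable (fun _ : ℝ => (1:ℂ)) μ :=
      (integrableOn_const_iff (C := (1:ℂ))).mpr (Or.inr measure_Ioc_lt_top)
    have hb : Integrable (fun p : ℝ × ℝ => (χ p.2 : ℂ)) (μ.prod ν) := by
      have := hone.mul_prod hχℂ
      simpa using this
    have hBc : Continuous (fun p : ℝ × ℝ => gC (p.1 - p.2) * Complex.exp (-Complex.I * n * p.1)) := by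
      apply Continuous.mul
      · exact hgCc.comp (continuous_fst.sub continuous_snd)
      · exact Complex.continuous_exp.comp
          (continuous_const.mul (Complex.continuous_ofReal.comp continuous_fst))
    have hexp1 : ∀ x : ℝ, ‖Complex.exp (-Complex.I * n * x)‖ = 1 := by
      intro x
      rw [Complex.norm_exp]
      have : (-Complex.I * n * x).re = 0 := by simp
      rw [this, Real.exp_zero]
    have hF : Integrable (fun p : ℝ × ℝ =>
        (χ p.2 : ℂ) * gC (p.1 - p.2) * Complex.exp (-Complex.I * n * p.1)) (μ.prod ν) := by
      have h1 : Integrable (fun p : ℝ × ℝ =>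
          (gC (p.1 - p.2) * Complex.exp (-Complex.I * n * p.1)) * (χ p.2 : ℂ)) (μ.prod ν) := by
        apply hb.bdd_mul hBc.aestronglyMeasurable
        refine Filter.Eventually.of_forall (fun p => ?_)
        rw [norm_mul, hexp1, mul_one]
        exact hM _
      have heqf : (fun p : ℝ × ℝ =>
          (χ p.2 : ℂ) * gC (p.1 - p.2) * Complex.exp (-Complex.I * n * p.1))
          = (fun p : ℝ × ℝ =>
          (gC (p.1 - p.2) * Complex.exp (-Complex.I * n * p.1)) * (χ p.2 : ℂ)) := by
        funext p; ring
      rw [heqf]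
      exact h1
    -- periodicity of gC * e
    have hper2 : Function.Periodic (fun s : ℝ => gC s * e s) (2 * π) := by
      intro s
      simp only [he_def]
      rw [hgCper s]
      congr 1
      have h1 : (-Complex.I * n * ((s : ℝ) + 2 * π : ℝ) : ℂ)
          = -Complex.I * n * s + (((-n : ℤ) : ℂ)) * (2 * (π:ℂ) * Complex.I) := by
        push_cast; ring
      rw [h1, Complex.exp_add, Complex.exp_int_mul_two_pi_mul_I, mul_one]
    -- inner translation identity
    have hinner : ∀ l : ℝ, (∫ t, gC (t - l) * e (t - l) ∂μ) = γ n := by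
      intro l
      rw [hμ, ← intervalIntegral.integral_of_le h2π]
      rw [intervalIntegral.integral_comp_sub_right (fun s => gC s * e s) l]
      have := hper2.intervalIntegral_add_eq (0 - l) 0
      rw [zero_add] at this
      have harg : (0:ℝ) - l + 2 * π = 2 * π - l := by ring
      rw [harg] at this
      rw [this]
    -- main computation
    have hrel : γ n = (c : ℂ) * (χh * γ n) := by
      have step1 : γ n = ∫ t, gC t * e t ∂μ := intervalIntegral.integral_of_le h2π
      have step2 : (∫ t, gC t * e t ∂μ)
          = ∫ t, (c : ℂ) * ∫ l, (χ l : ℂ) * gC (t - l) * e t ∂ν ∂μ := by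
        apply integral_congr_ae
        filter_upwards with t
        rw [hgCeq t, hν]
        rw [mul_assoc, mul_comm (∫ l in Ioi (0:ℝ), (χ l : ℂ) * gC (t - l)) (e t),
          ← integral_const_mul (e t)]
        congr 1
        apply integral_congr_ae
        filter_upwards with l
        ring
      have step3 : (∫ t, (c : ℂ) * ∫ l, (χ l : ℂ) * gC (t - l) * e t ∂ν ∂μ)
          = (c : ℂ) * ∫ t, ∫ l, (χ l : ℂ) * gC (t - l) * e t ∂ν ∂μ :=
        integral_const_mul _ _
      have hFu : Integrable (Function.uncurry
          (fun t l : ℝ => (χ l : ℂ) * gC (t - l) * e t)) (μ.prod ν) := hF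
      have step4 : (∫ t, ∫ l, (χ l : ℂ) * gC (t - l) * e t ∂ν ∂μ)
          = ∫ l, ∫ t, (χ l : ℂ) * gC (t - l) * e t ∂μ ∂ν :=
        integral_integral_swap hFu
      have step5 : (∫ l, ∫ t, (χ l : ℂ) * gC (t - l) * e t ∂μ ∂ν)
          = ∫ l, ((χ l : ℂ) * e l) * γ n ∂ν := by
        apply integral_congr_ae
        filter_upwards with l
        have hsplit : ∀ t : ℝ, (χ l : ℂ) * gC (t - l) * e t
            = ((χ l : ℂ) * e l) * (gC (t - l) * e (t - l)) := by
          intro t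
          have : e t = e l * e (t - l) := by
            rw [he_def]
            simp only
            rw [← Complex.exp_add]
            congr 1
            push_cast
            ring
          rw [this]
          ring
        calc (∫ t, (χ l : ℂ) * gC (t - l) * e t ∂μ)
            = ∫ t, ((χ l : ℂ) * e l) * (gC (t - l) * e (t - l)) ∂μ := by
              apply integral_congr_ae; filter_upwards with t; exact hsplit t
          _ = ((χ l : ℂ) * e l) * ∫ t, gC (t - l) * e (t - l) ∂μ := integral_const_mul _ _
          _ = ((χ l : ℂ) * e l) * γ n := by rw [hinner l]
      have step6 : (∫ l, ((χ l : ℂ) * e l) * γ n ∂ν) = χh * γ n := by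
        rw [integral_mul_const, hχh, hν]
      exact step1.trans (step2.trans (step3.trans
        (congrArg (fun z => (c : ℂ) * z) (step4.trans (step5.trans step6)))))
    have hzero : ((1 : ℂ) - (c : ℂ) * χh) * γ n = 0 := by
      linear_combination hrel
    rcases mul_eq_zero.mp hzero with h | h
    · exact absurd h (hchar n hn1 hn2)
    · exact h
  have hall : ∀ n : ℤ, fourierCoeff (⇑G) n = 0 := by
    intro n
    rw [hfc n]
    rcases eq_or_ne n 1 with rfl | h1
    · rw [hγ1, mul_zero]
    rcases eq_or_ne n (-1) with rfl | h2
    · rw [hγneg1, mul_zero]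
    rw [hkey n h1 h2, mul_zero]
  have hG0 : G = 0 := fourier_uniq G hall
  funext t
  have h0 : G (t : AddCircle (2 * π)) = 0 := by rw [hG0]; rfl
  rw [hGg t] at h0
  have := congrArg Complex.re h0
  simpa [gC] using this
end

section
/- Let χ ∈ L¹((0,∞),ℝ) with l ↦ lχ(l) ∈ L¹, let c ∈ ℝ and ω₀ > 0, and suppose 1 = c·χ̂(ω₀) where χ̂(θ) := ∫₀^∞ χ(l) e^{−iθl} dl, and that the smooth branch λ(ν) of roots of Δ(ν,λ) := 1 − c(ν) χ̂_λ (with c(ν) := ∂_w f(ν, w̄_ν), χ̂_λ := ∫₀^∞ χ(l) e^{−λl} dl) satisfies Δ(ν, λ(ν)) = 0 and λ(ν₀) = iω₀. If ∂_λ Δ(ν₀, iω₀) ≠ 0, then dλ/dν(ν₀) = [∂_ν c(ν₀) · ∫₀^∞ χ(l) e^{−iω₀ l} dl] / [c(ν₀) · ∫₀^∞ l χ(l) e^{−iω₀ l} dl], and Re(dλ/dν(ν₀)) ≠ 0 is equivalent to ∂_ν c(ν₀) · Im(χ̂'(ω₀)) ≠ 0, where χ̂'(θ) = −i ∫₀^∞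 l χ(l) e^{−iθl} dl. -/
set_option maxHeartbeats 1000000
open MeasureTheory Set Complex

lemma aux_deriv (χ : ℝ → ℝ) (hχ : IntegrableOn χ (Ioi 0))
    (hdom : ∃ ε > (0:ℝ), IntegrableOn (fun l => Real.exp (ε * l) * |χ l|) (Ioi 0))
    (ω₀ : ℝ) :
    HasDerivAt (fun z : ℂ => ∫ l in Ioi (0:ℝ), (χ l : ℂ) * Complex.exp (-z * l))
      (-(∫ l in Ioi (0:ℝ), (l : ℂ) * (χ l : ℂ) * Complex.exp (-(Complex.I * ω₀) * l)))
      (Complex.I * ω₀) := by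
  obtain ⟨ε, hε, hint⟩ := hdom
  set x₀ : ℂ := Complex.I * ω₀ with hx₀
  have hx₀re : x₀.re = 0 := by simp [hx₀]
  have hcont : ∀ z : ℂ, Continuous fun l : ℝ => Complex.exp (-z * l) := by
    intro z; exact Complex.continuous_exp.comp (by fun_prop)
  have hmeasχ : AEStronglyMeasurable (fun l : ℝ => (χ l : ℂ))
      (volume.restrict (Ioi 0)) :=
    Complex.continuous_ofReal.comp_aestronglyMeasurable hχ.aestronglyMeasurable
  have hF_meas : ∀ᶠ z in nhds x₀, AEStronglyMeasurable
      (fun l : ℝ => (χ l : ℂ) * Complex.exp (-z * l)) (volume.restrict (Ioi 0)) := by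
    filter_upwards with z
    exact hmeasχ.mul (hcont z).aestronglyMeasurable
  have hnorm : ∀ (z : ℂ) (l : ℝ),
      ‖(χ l : ℂ) * Complex.exp (-z * l)‖ = |χ l| * Real.exp (-(z.re * l)) := by
    intro z l
    simp [Complex.norm_exp]
  have hF_int : Integrable (fun l : ℝ => (χ l : ℂ) * Complex.exp (-x₀ * l))
      (volume.restrict (Ioi 0)) := by
    refine Integrable.mono' hχ.abs (hmeasχ.mul (hcont x₀).aestronglyMeasurable) ?_
    filter_upwards with l
    rw [hnorm]
    simp [hx₀re]
  have hF'_meas : AEStronglyMeasurable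
      (fun l : ℝ => (χ l : ℂ) * (Complex.exp (-x₀ * l) * (-(l : ℂ))))
      (volume.restrict (Ioi 0)) := by
    refine hmeasχ.mul (Continuous.aestronglyMeasurable ?_)
    exact (hcont x₀).mul (by fun_prop)
  have h_bound : ∀ᵐ l ∂(volume.restrict (Ioi (0:ℝ))), ∀ z ∈ Metric.ball x₀ (ε/2),
      ‖(χ l : ℂ) * (Complex.exp (-z * l) * (-(l : ℂ)))‖ ≤ (2/ε) * (Real.exp (ε * l) * |χ l|) := by
    rw [ae_restrict_iff' measurableSet_Ioi]
    filter_upwards with l hl z hz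
    have hl0 : (0:ℝ) < l := hl
    have hre : |z.re| < ε/2 := by
      have := Complex.abs_re_le_norm (z - x₀)
      have h2 : ‖z - x₀‖ < ε/2 := by
        simpa [Complex.dist_eq] using hz
      have : |(z - x₀).re| < ε/2 := lt_of_le_of_lt this h2
      simpa [Complex.sub_re, hx₀re] using this
    have hexp : Real.exp (-(z.re * l)) ≤ Real.exp (ε/2 * l) := by
      apply Real.exp_le_exp.2
      nlinarith [abs_le.1 hre.le]
    have hll : l ≤ (2/ε) * Real.exp (ε/2 * l) := by
      have h1 := Real.add_one_le_exp (ε/2 * l)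
      have h2 : ε/2 * l ≤ Real.exp (ε/2 * l) := by nlinarith
      calc l = (2/ε) * (ε/2 * l) := by field_simp
        _ ≤ (2/ε) * Real.exp (ε/2 * l) := by
            apply mul_le_mul_of_nonneg_left h2 (by positivity)
    have hn : ‖(χ l : ℂ) * (Complex.exp (-z * l) * (-(l : ℂ)))‖
        = |χ l| * (Real.exp (-(z.re * l)) * l) := by
      have hr : (-z * (l:ℂ)).re = -(z.re * l) := by simp [Complex.mul_re]
      simp only [norm_mul, Complex.norm_exp, hr, norm_neg,
        Complex.norm_real, Real.norm_eq_abs, abs_of_pos hl0]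
    rw [hn]
    calc |χ l| * (Real.exp (-(z.re * l)) * l)
        ≤ |χ l| * (Real.exp (ε/2*l) * ((2/ε) * Real.exp (ε/2 * l))) := by
          apply mul_le_mul_of_nonneg_left _ (abs_nonneg _)
          exact mul_le_mul hexp hll (le_of_lt hl0) (by positivity)
      _ = (2/ε) * (Real.exp (ε * l) * |χ l|) := by
          rw [show Real.exp (ε * l) = Real.exp (ε/2*l) * Real.exp (ε/2*l) by
            rw [← Real.exp_add]; ring_nf]
          ring
  have bound_int : Integrable (fun l : ℝ => (2/ε) * (Real.exp (ε * l) * |χ l|))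
      (volume.restrict (Ioi 0)) := hint.const_mul _
  have h_diff : ∀ᵐ l ∂(volume.restrict (Ioi (0:ℝ))), ∀ z ∈ Metric.ball x₀ (ε/2),
      HasDerivAt (fun z : ℂ => (χ l : ℂ) * Complex.exp (-z * l))
        ((χ l : ℂ) * (Complex.exp (-z * l) * (-(l : ℂ)))) z := by
    filter_upwards with l z _
    have h1 : HasDerivAt (fun z : ℂ => -z * l) (-(l:ℂ)) z := by
      simpa using ((hasDerivAt_id z).neg.mul_const (l:ℂ))
    exact (h1.cexp).const_mul _
  have key := hasDerivAt_integral_of_dominated_loc_of_deriv_le (Metric.ball_mem_nhds x₀ (by positivity : (0:ℝ) < ε/2))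
    hF_meas hF_int hF'_meas h_bound bound_int h_diff
  have heq : (fun l : ℝ => (χ l : ℂ) * (Complex.exp (-x₀ * l) * (-(l : ℂ))))
      = fun l : ℝ => -((l : ℂ) * (χ l : ℂ) * Complex.exp (-(Complex.I * ω₀) * l)) := by
    funext l; rw [hx₀]; ring
  have := key.2
  rwa [heq, integral_neg] at this

/-- derivative of the root branch of the characteristic function
`Δ(ν,λ) = 1 − c(ν) ∫₀^∞ χ(l) e^{−λl} dl` along `Δ(ν, λ(ν)) = 0`, `λ(ν₀) = iω₀`, and
the equivalence `Re λ'(ν₀) ≠ 0 ↔ c'(ν₀)·Im χ̂'(ω₀) ≠ 0` under the normalization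
`c(ν₀) χ̂(ω₀) = 1`, where `χ̂'(θ) = −i ∫₀^∞ l χ(l) e^{−iθl} dl`. -/
theorem stmt_12 (χ : ℝ → ℝ)
    (hχ : IntegrableOn χ (Ioi 0))
    (hlχ : IntegrableOn (fun l => l * χ l) (Ioi 0))
    (hdom : ∃ ε > (0:ℝ), IntegrableOn (fun l => Real.exp (ε * l) * |χ l|) (Ioi 0))
    (c : ℝ → ℝ) (lam : ℝ → ℂ) (ν₀ ω₀ : ℝ) (hω₀ : 0 < ω₀)
    (c' : ℝ) (lam' : ℂ)
    (hc : HasDerivAt c c' ν₀) (hlam : HasDerivAt lam lam' ν₀)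
    (hroot : ∀ ν : ℝ,
      (1 : ℂ) - (c ν : ℂ) * ∫ l in Ioi (0:ℝ), (χ l : ℂ) * Complex.exp (-(lam ν) * l) = 0)
    (hlam0 : lam ν₀ = Complex.I * ω₀)
    (hnorm : (c ν₀ : ℂ)
        * (∫ l in Ioi (0:ℝ), (χ l : ℂ) * Complex.exp (-(Complex.I * ω₀) * l)) = 1)
    (hsimple : (c ν₀ : ℂ)
        * (∫ l in Ioi (0:ℝ), (l : ℂ) * (χ l : ℂ) * Complex.exp (-(Complex.I * ω₀) * l)) ≠ 0) :
    lam' = ((c' : ℂ) * ∫ l in Ioi (0:ℝ), (χ l : ℂ) * Complex.exp (-(Complex.I * ω₀) * l))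
        / ((c ν₀ : ℂ) * ∫ l in Ioi (0:ℝ), (l : ℂ) * (χ l : ℂ) * Complex.exp (-(Complex.I * ω₀) * l))
      ∧ (lam'.re ≠ 0 ↔
          c' * (-Complex.I
              * ∫ l in Ioi (0:ℝ), (l : ℂ) * (χ l : ℂ) * Complex.exp (-(Complex.I * ω₀) * l)).im ≠ 0) := by
  set G : ℂ → ℂ := fun z => ∫ l in Ioi (0:ℝ), (χ l : ℂ) * Complex.exp (-z * l) with hG
  set L : ℂ := ∫ l in Ioi (0:ℝ), (l : ℂ) * (χ l : ℂ) * Complex.exp (-(Complex.I * ω₀) * l) with hL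
  have hc0 : (c ν₀ : ℂ) ≠ 0 := fun h => hsimple (by rw [h]; ring)
  have hLne : L ≠ 0 := fun h => hsimple (by rw [h]; ring)
  have hG' : HasDerivAt G (-L) (lam ν₀) := by
    rw [hlam0]; exact aux_deriv χ hχ hdom ω₀
  have hcomp : HasDerivAt (fun ν => G (lam ν)) (lam' • (-L)) ν₀ :=
    HasDerivAt.scomp ν₀ hG' hlam
  have hcR : HasDerivAt (fun ν => ((c ν : ℂ))) ((c' : ℂ)) ν₀ := hc.ofReal_comp
  have hprod : HasDerivAt (fun ν => (c ν : ℂ) * G (lam ν))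
      ((c' : ℂ) * G (lam ν₀) + (c ν₀ : ℂ) * (lam' • (-L))) ν₀ := hcR.mul hcomp
  have hconst : (fun ν => (c ν : ℂ) * G (lam ν)) = fun _ => (1 : ℂ) := by
    funext ν; exact (sub_eq_zero.mp (hroot ν)).symm
  rw [hconst] at hprod
  have hzero : (c' : ℂ) * G (lam ν₀) + (c ν₀ : ℂ) * (lam' • (-L)) = 0 :=
    hprod.unique (hasDerivAt_const _ _)
  have hGν₀ : G (lam ν₀) = ∫ l in Ioi (0:ℝ), (χ l : ℂ) * Complex.exp (-(Complex.I * ω₀) * l) := by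
    rw [hlam0]
  rw [hGν₀] at hzero
  set Gh : ℂ := ∫ l in Ioi (0:ℝ), (χ l : ℂ) * Complex.exp (-(Complex.I * ω₀) * l) with hGh
  have heq1 : lam' = ((c' : ℂ) * Gh) / ((c ν₀ : ℂ) * L) := by
    rw [eq_div_iff (mul_ne_zero hc0 hLne)]
    have : lam' • (-L) = -(lam' * L) := by rw [smul_eq_mul]; ring
    rw [this] at hzero
    linear_combination -hzero
  refine ⟨heq1, ?_⟩
  have hcr : c ν₀ ≠ 0 := Complex.ofReal_ne_zero.mp hc0
  have hnsp : (0:ℝ) < Complex.normSq L := Complex.normSq_pos.2 hLne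
  have heq2 : lam' = (c' : ℂ) / (((c ν₀ : ℂ))^2 * L) := by
    rw [heq1, div_eq_div_iff (mul_ne_zero hc0 hLne) (mul_ne_zero (pow_ne_zero 2 hc0) hLne)]
    linear_combination (c':ℂ) * L * (c ν₀ : ℂ) * hnorm
  have hre : lam'.re = c' * L.re / ((c ν₀)^2 * Complex.normSq L) := by
    rw [heq2, Complex.div_re]
    have h1 : ((((c ν₀ : ℂ))^2) * L).re = (c ν₀)^2 * L.re := by
      rw [← Complex.ofReal_pow, Complex.re_ofReal_mul]
    have h2 : ((((c ν₀ : ℂ))^2) * L).im = (c ν₀)^2 * L.im := by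
      rw [← Complex.ofReal_pow, Complex.im_ofReal_mul]
    have h3 : Complex.normSq ((((c ν₀ : ℂ))^2) * L) = ((c ν₀)^2)^2 * Complex.normSq L := by
      rw [← Complex.ofReal_pow, map_mul, Complex.normSq_ofReal]; ring
    rw [h1, h2, h3]
    simp only [Complex.ofReal_re, Complex.ofReal_im]
    have hc2 : (c ν₀)^2 ≠ 0 := pow_ne_zero 2 hcr
    field_simp
    ring
  have him : (-Complex.I * L).im = -L.re := by simp [Complex.mul_im]
  rw [him, hre]
  have hD : (0:ℝ) < (c ν₀)^2 * Complex.normSq L := by positivity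
  constructor
  · intro h hcon
    apply h
    rw [div_eq_zero_iff]; left; linear_combination -hcon
  · intro h hcon
    apply h
    rw [div_eq_zero_iff] at hcon
    rcases hcon with hcon | hcon
    · linear_combination -hcon
    · exact absurd hcon hD.ne'
end
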